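/- Fix a real β > −1 and integers 1 ≤ r ≤ l. Define Z_β := ∫_0^∞ c^β exp(−c²/2) dc, and for c > 0 define I_{l,r}(c) := (c^{r-1}/(2l-r-1)!) ∫_0^∞ (σ + c) σ^{2l-r-1} exp(−σ²/2 − cσ) dσ. Then ∫_0^∞ I_{l,r}(c) · c^β exp(−c²/2) / Z_β dc = 2^{−(l-r)} · (∏_{i=0}^{r-2} ((β+1)/2 + i/2)) / (∏_{i=0}^{l-2} (β/2 + 1 + i)), where empty products equal 1. -/

import Mathlib

open Finset MeasureTheory

/-- `I l r c` : the limiting probability of a fixed bouquet configuration with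
`r` binary trees spanning `l` marked vertices, in the critical regime `κ = c√N`. -/
noncomputable def I (l r : ℕ) (c : ℝ) : ℝ :=
  (c ^ (r - 1) / (Nat.factorial (2 * l - r - 1) : ℝ)) *
    ∫ σ in Set.Ioi (0 : ℝ),
      (σ + c) * σ ^ (2 * l - r - 1) * Real.exp (-σ ^ 2 / 2 - c * σ)

/-- The normalising constant `Z_β = ∫_0^∞ c^β e^{-c²/2} dc`. -/
noncomputable def Z (β : ℝ) : ℝ :=
  ∫ c in Set.Ioi (0 : ℝ), c ^ β * Real.exp (-c ^ 2 / 2)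


open scoped ENNReal

lemma prodEO (x : ℝ) (k : ℕ) : ∏ i ∈ range (2*k+1), (x + 1 + i) =
    2^(2*k+1) * ((∏ i ∈ range (k+1), ((x+1)/2 + i)) * ∏ i ∈ range k, (x/2 + 1 + i)) := by
  induction k with
  | zero => simp; ring
  | succ k ih =>
    have h : 2*(k+1)+1 = (2*k+1)+1+1 := by ring
    rw [h]
    simp only [prod_range_succ] at ih ⊢
    push_cast at ih ⊢
    linear_combination ((x+2*(k:ℝ)+2)*(x+2*(k:ℝ)+3)) * ih

lemma GammaAddNat {x : ℝ} (hx : 0 < x) (n : ℕ) :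
    Real.Gamma (x + n) = Real.Gamma x * ∏ i ∈ range n, (x + i) := by
  induction n with
  | zero => simp
  | succ n ih =>
    have : x + (n+1 : ℕ) = (x + n) + 1 := by push_cast; ring
    rw [this, Real.Gamma_add_one (by positivity), ih, prod_range_succ]
    ring

set_option maxHeartbeats 1000000 in
lemma final_algebra (β : ℝ) (hβ : -1 < β) (l r : ℕ) (hr1 : 1 ≤ r) (hrl : r ≤ l) :
    2^l * (∏ i ∈ range l, ((β+1)/2 + i)) / ∏ j ∈ range (2*l - r), (β + (r:ℝ) + j)
     = (1 / 2^(l-r)) * (∏ i ∈ range (r-1), ((β + 1)/2 + (i:ℝ)/2)) /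
        (∏ i ∈ range (l-1), (β/2 + 1 + (i:ℝ))) := by
  have hb : (0:ℝ) < β + 1 := by linarith
  have hPl : 0 < ∏ i ∈ range l, ((β+1)/2 + (i:ℝ)) :=
    Finset.prod_pos fun i _ => by have : (0:ℝ) ≤ i := Nat.cast_nonneg i; linarith
  have hPl1 : 0 < ∏ i ∈ range (l-1), (β/2 + 1 + (i:ℝ)) :=
    Finset.prod_pos fun i _ => by have : (0:ℝ) ≤ i := Nat.cast_nonneg i; linarith
  have hPr1 : 0 < ∏ i ∈ range (r-1), (β + 1 + (i:ℝ)) :=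
    Finset.prod_pos fun i _ => by have : (0:ℝ) ≤ i := Nat.cast_nonneg i; linarith
  have hsplit : (∏ i ∈ range (r-1), (β+1+(i:ℝ))) * ∏ j ∈ range (2*l-r), (β + (r:ℝ) + j)
      = ∏ i ∈ range (2*l-1), (β+1+(i:ℝ)) := by
    have he : 2*l-1 = (r-1) + (2*l-r) := by omega
    rw [he, prod_range_add]
    congr 1
    refine Finset.prod_congr rfl fun j _ => ?_
    rw [Nat.cast_add, Nat.cast_sub hr1]
    push_cast
    ring
  have hEO : ∏ i ∈ range (2*l-1), (β+1+(i:ℝ))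
      = 2^(2*l-1) * ((∏ i ∈ range l, ((β+1)/2+(i:ℝ))) * ∏ i ∈ range (l-1), (β/2+1+(i:ℝ))) := by
    have h1 : 2*(l-1)+1 = 2*l-1 := by omega
    have h2 : (l-1)+1 = l := by omega
    have := prodEO β (l-1)
    rw [h1, h2] at this
    exact this
  have hP1 : ∏ i ∈ range (r-1), ((β+1)/2 + (i:ℝ)/2)
      = (∏ i ∈ range (r-1), (β+1+(i:ℝ))) / 2^(r-1) := by
    calc ∏ i ∈ range (r-1), ((β+1)/2 + (i:ℝ)/2)
        = ∏ i ∈ range (r-1), ((β+1+(i:ℝ))/2) := Finset.prod_congr rfl fun i _ => by ring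
      _ = (∏ i ∈ range (r-1), (β+1+(i:ℝ))) / 2^(r-1) := by
          rw [prod_div_distrib, prod_const, card_range]
  have hQ : ∏ j ∈ range (2*l-r), (β + (r:ℝ) + j)
      = 2^(2*l-1) * ((∏ i ∈ range l, ((β+1)/2+(i:ℝ))) * ∏ i ∈ range (l-1), (β/2+1+(i:ℝ)))
        / ∏ i ∈ range (r-1), (β+1+(i:ℝ)) := by
    rw [eq_div_iff hPr1.ne', ← hEO, ← hsplit]; ring
  have h2 : (2:ℝ)^(2*l-1) = 2^l * 2^(l-r) * 2^(r-1) := by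
    rw [← pow_add, ← pow_add]; congr 1; omega
  have h2l : (0:ℝ) < 2^l := by positivity
  have h2lr : (0:ℝ) < 2^(l-r) := by positivity
  have h2r1 : (0:ℝ) < 2^(r-1) := by positivity
  rw [hP1, hQ, h2]
  generalize (∏ i ∈ range l, ((β+1)/2+(i:ℝ))) = A at hPl ⊢
  generalize (∏ i ∈ range (l-1), (β/2+1+(i:ℝ))) = B at hPl1 ⊢
  generalize (∏ i ∈ range (r-1), (β+1+(i:ℝ))) = C at hPr1 ⊢
  generalize ((2:ℝ)^l) = a at h2l ⊢
  generalize ((2:ℝ)^(l-r)) = b at h2lr ⊢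
  generalize ((2:ℝ)^(r-1)) = c at h2r1 ⊢
  field_simp


lemma gaussMomentIntegrable {a : ℝ} (ha : -1 < a) :
    IntegrableOn (fun t : ℝ => t ^ a * Real.exp (-t^2/2)) (Set.Ioi 0) := by
  have h := integrableOn_rpow_mul_exp_neg_mul_sq (b := 1/2) (by norm_num) ha
  exact h.congr_fun (fun t _ => by norm_num; left; ring) measurableSet_Ioi

lemma gaussMoment {a : ℝ} (ha : -1 < a) :
    ∫ t in Set.Ioi (0:ℝ), t ^ a * Real.exp (-t^2/2)
      = 2 ^ ((a-1)/2) * Real.Gamma ((a+1)/2) := by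
  have h1 : ∫ t in Set.Ioi (0:ℝ), t ^ a * Real.exp (-t^2/2)
      = ∫ t in Set.Ioi (0:ℝ), t ^ a * Real.exp (-(1/2) * t ^ (2:ℝ)) := by
    refine setIntegral_congr_fun measurableSet_Ioi (fun t ht => ?_)
    have h2 : t ^ (2:ℝ) = t ^ (2:ℕ) := by
      rw [← Real.rpow_natCast t 2]; norm_num
    rw [h2]; ring_nf
  rw [h1, integral_rpow_mul_exp_neg_mul_rpow two_pos ha (by norm_num)]
  have h2 : ((1/2:ℝ)) ^ (-(a+1)/2) * (1/2) = (2:ℝ) ^ ((a-1)/2) := by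
    rw [one_div, ← Real.rpow_neg_one (2:ℝ), ← Real.rpow_mul (by norm_num : (0:ℝ) ≤ 2),
      ← Real.rpow_add (by norm_num : (0:ℝ) < 2)]
    congr 1; ring
  rw [h2]

lemma gaussMomentNatIntegrable (n : ℕ) :
    IntegrableOn (fun t : ℝ => t ^ n * Real.exp (-t^2/2)) (Set.Ioi 0) := by
  have h := gaussMomentIntegrable (a := n)
    (lt_of_lt_of_le (by norm_num) (Nat.cast_nonneg n))
  refine h.congr_fun (fun t ht => ?_) measurableSet_Ioi
  simp only [Real.rpow_natCast]


lemma betaAuxIntegrable (m : ℕ) {s : ℝ} (hs : 0 < s) {t : ℝ} (ht : 0 < t) :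
    IntegrableOn (fun σ : ℝ => σ ^ m * (t - σ) ^ (s-1)) (Set.Ioo 0 t) := by
  have h1 : IntervalIntegrable (fun x : ℝ => x ^ (s-1)) volume (t - 0) (t - t) :=
    (intervalIntegral.intervalIntegrable_rpow' (by linarith)).symm
  have h2 : IntervalIntegrable (fun x : ℝ => (t - x) ^ (s-1)) volume 0 t := by
    have := h1.comp_sub_left t
    simpa using this
  have h3 : IntervalIntegrable (fun x : ℝ => x ^ m * (t - x) ^ (s-1)) volume 0 t :=
    h2.continuousOn_mul (by fun_prop)
  exact (intervalIntegrable_iff_integrableOn_Ioo_of_le ht.le).mp h3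

lemma betaAux (m : ℕ) {s : ℝ} (hs : 0 < s) {t : ℝ} (ht : 0 < t) :
    ∫ σ in Set.Ioo (0:ℝ) t, σ ^ m * (t - σ) ^ (s-1)
      = t ^ ((m:ℝ) + s) * ((m.factorial : ℝ) / ∏ j ∈ range (m+1), (s + j)) := by
  have key := Complex.betaIntegral_scaled ((m:ℂ)+1) (s:ℂ) ht
  have hbeta : Complex.betaIntegral ((m:ℂ)+1) (s:ℂ)
      = (m.factorial : ℂ) / ∏ j ∈ range (m+1), ((s:ℂ) + j) := by
    rw [← Complex.betaIntegral_symm,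
      Complex.betaIntegral_eval_nat_add_one_right (by simpa using hs) m]
  have hofReal : ∫ x in (0:ℝ)..t, ((x ^ m * (t - x) ^ (s-1) : ℝ) : ℂ)
      = ∫ x in (0:ℝ)..t, ((x:ℂ) ^ ((m:ℂ)+1-1) * ((t:ℂ) - x) ^ ((s:ℂ)-1)) := by
    refine intervalIntegral.integral_congr fun x hx => ?_
    rw [Set.uIcc_of_le ht.le] at hx
    have hx1 : (0:ℝ) ≤ t - x := by linarith [hx.2]
    push_cast
    rw [add_sub_cancel_right, Complex.cpow_natCast,
      show ((t:ℂ) - (x:ℂ)) = ((t - x : ℝ) : ℂ) from by push_cast; ring,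
      show ((s:ℂ) - 1) = ((s - 1 : ℝ) : ℂ) from by push_cast; ring,
      ← Complex.ofReal_cpow hx1]
  have hval : ((∫ σ in Set.Ioo (0:ℝ) t, σ ^ m * (t - σ) ^ (s-1) : ℝ) : ℂ)
      = ((t ^ ((m:ℝ) + s) * ((m.factorial : ℝ) / ∏ j ∈ range (m+1), (s + j)) : ℝ) : ℂ) := by
    rw [← integral_Ioc_eq_integral_Ioo, ← intervalIntegral.integral_of_le ht.le,
      ← intervalIntegral.integral_ofReal, hofReal, key, hbeta]
    rw [show (m:ℂ)+1+s-1 = (((m:ℝ) + s : ℝ) : ℂ) by push_cast; ring,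
      ← Complex.ofReal_cpow ht.le]
    push_cast
    ring
  exact_mod_cast hval



noncomputable def Faux (s : ℝ) (k : ℕ) (c σ : ℝ) : ℝ :=
  c ^ (s-1) * ((σ + c) * σ ^ k * Real.exp (-(σ + c)^2/2))

noncomputable def Jaux (s : ℝ) (k : ℕ) (σ t : ℝ) : ℝ≥0∞ :=
  if σ < t then ENNReal.ofReal (σ ^ k * (t - σ) ^ (s-1) * (t * Real.exp (-t^2/2))) else 0

lemma Faux_meas (s : ℝ) (k : ℕ) : Measurable (Function.uncurry (Faux s k)) := by
  unfold Function.uncurry Faux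
  fun_prop

lemma Faux_nn (s : ℝ) (k : ℕ) {c σ : ℝ} (hc : 0 < c) (hσ : 0 < σ) : 0 ≤ Faux s k c σ := by
  unfold Faux
  have h1 : (0:ℝ) ≤ c ^ (s-1) := Real.rpow_nonneg hc.le _
  have h2 : (0:ℝ) ≤ (σ + c) * σ ^ k * Real.exp (-(σ + c)^2/2) :=
    mul_nonneg (mul_nonneg (by linarith) (pow_nonneg hσ.le _)) (Real.exp_pos _).le
  exact mul_nonneg h1 h2

lemma Faux_sec (s : ℝ) (k : ℕ) {c : ℝ} (hc : 0 < c) :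
    IntegrableOn (fun σ => Faux s k c σ) (Set.Ioi 0) := by
  have hg : IntegrableOn (fun σ : ℝ => (σ + c) * σ ^ k * Real.exp (-(σ + c)^2/2)) (Set.Ioi 0) := by
    have hmaj : IntegrableOn
        (fun σ : ℝ => σ^(k+1) * Real.exp (-σ^2/2) + c * (σ^k * Real.exp (-σ^2/2))) (Set.Ioi 0) :=
      (gaussMomentNatIntegrable (k+1)).add ((gaussMomentNatIntegrable k).const_mul c)
    refine hmaj.mono' ?_ ?_
    · exact (by fun_prop :
        Measurable fun σ : ℝ => (σ + c) * σ ^ k * Real.exp (-(σ + c)^2/2)).aestronglyMeasurable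
    · filter_upwards [ae_restrict_mem measurableSet_Ioi] with σ hσ
      have hσ0 : (0:ℝ) < σ := hσ
      have he : Real.exp (-(σ+c)^2/2) ≤ Real.exp (-σ^2/2) :=
        Real.exp_le_exp.mpr (by nlinarith)
      have h0 : 0 ≤ (σ+c) * σ^k * Real.exp (-(σ+c)^2/2) :=
        mul_nonneg (mul_nonneg (by linarith) (pow_nonneg hσ0.le _)) (Real.exp_pos _).le
      rw [Real.norm_eq_abs, abs_of_nonneg h0]
      calc (σ+c) * σ^k * Real.exp (-(σ+c)^2/2) ≤ (σ+c) * σ^k * Real.exp (-σ^2/2) :=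
            mul_le_mul_of_nonneg_left he
              (mul_nonneg (by linarith) (pow_nonneg hσ0.le _))
        _ = σ^(k+1) * Real.exp (-σ^2/2) + c * (σ^k * Real.exp (-σ^2/2)) := by ring
  exact hg.const_mul _

lemma Jaux_meas (s : ℝ) (k : ℕ) : Measurable (Function.uncurry (Jaux s k)) := by
  unfold Function.uncurry Jaux
  refine Measurable.ite (measurableSet_lt measurable_fst measurable_snd) ?_ measurable_const
  fun_prop

lemma trans_lemma (s : ℝ) (k : ℕ) {σ : ℝ} (hσ : 0 < σ) :
    ∫⁻ c in Set.Ioi (0:ℝ), ENNReal.ofReal (Faux s k c σ) = ∫⁻ t in Set.Ioi (0:ℝ), Jaux s k σ t := by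
  have hcomp : ∀ c ∈ Set.Ioi (0:ℝ), ENNReal.ofReal (Faux s k c σ) = Jaux s k σ (c + σ) := by
    intro c hc
    have hc0 : (0:ℝ) < c := hc
    unfold Jaux Faux
    rw [if_pos (by linarith : σ < c + σ), add_sub_cancel_right]
    congr 1
    rw [show σ + c = c + σ from add_comm σ c]
    ring
  calc ∫⁻ c in Set.Ioi (0:ℝ), ENNReal.ofReal (Faux s k c σ)
      = ∫⁻ c in Set.Ioi (0:ℝ), Jaux s k σ (c + σ) :=
        setLIntegral_congr_fun measurableSet_Ioi hcomp
    _ = ∫⁻ t in Set.Ioi σ, Jaux s k σ t := by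
        have hpre : (fun x : ℝ => x + σ) ⁻¹' (Set.Ioi σ) = Set.Ioi 0 := by ext x; simp
        rw [← hpre]
        exact (measurePreserving_add_right volume σ).setLIntegral_comp_preimage_emb
          (MeasurableEquiv.addRight σ).measurableEmbedding _ _
    _ = ∫⁻ t in Set.Ioi 0, Jaux s k σ t := by
        rw [← Set.Ioc_union_Ioi_eq_Ioi hσ.le,
          lintegral_union measurableSet_Ioi Set.Ioc_disjoint_Ioi_same]
        have hzero : ∫⁻ t in Set.Ioc (0:ℝ) σ, Jaux s k σ t = 0 := by
          have hz : ∀ t ∈ Set.Ioc (0:ℝ) σ, Jaux s k σ t = 0 := by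
            intro t ht; unfold Jaux; exact if_neg (not_lt.mpr ht.2)
          rw [setLIntegral_congr_fun measurableSet_Ioc hz]
          simp
        rw [hzero, zero_add]

lemma inner_lemma (k : ℕ) {s : ℝ} (hs : 0 < s) {t : ℝ} (ht : 0 < t) :
    ∫⁻ σ in Set.Ioi (0:ℝ), Jaux s k σ t
      = ENNReal.ofReal ((t ^ ((k:ℝ) + s)
          * ((k.factorial : ℝ) / ∏ j ∈ Finset.range (k+1), (s + j))) * (t * Real.exp (-t^2/2))) := by
  have e1 : ∫⁻ σ in Set.Ioi (0:ℝ), Jaux s k σ t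
      = ∫⁻ σ in Set.Ioi (0:ℝ), (Set.Iio t).indicator
          (fun σ => ENNReal.ofReal (σ ^ k * (t - σ) ^ (s-1) * (t * Real.exp (-t^2/2)))) σ := by
    refine setLIntegral_congr_fun measurableSet_Ioi (fun σ _ => ?_)
    simp only [Jaux, Set.indicator_apply, Set.mem_Iio]
  rw [e1, lintegral_indicator measurableSet_Iio, Measure.restrict_restrict measurableSet_Iio,
    show Set.Iio t ∩ Set.Ioi (0:ℝ) = Set.Ioo 0 t by rw [Set.inter_comm]; exact Set.Ioi_inter_Iio]
  rw [← ofReal_integral_eq_lintegral_ofReal ((betaAuxIntegrable k hs ht).mul_const _) ?_]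
  · rw [integral_mul_const, betaAux k hs ht]
  · filter_upwards [ae_restrict_mem measurableSet_Ioo] with σ hσ
    have h1 : 0 ≤ σ^k * (t-σ)^(s-1) :=
      mul_nonneg (pow_nonneg hσ.1.le k) (Real.rpow_nonneg (by linarith [hσ.2]) _)
    have h2 : 0 ≤ t * Real.exp (-t^2/2) := by positivity
    exact mul_nonneg h1 h2

lemma core (k : ℕ) {s : ℝ} (hs : 0 < s) :
    ∫ c in Set.Ioi (0:ℝ), ∫ σ in Set.Ioi (0:ℝ), Faux s k c σ
      = ((k.factorial : ℝ) / ∏ j ∈ Finset.range (k+1), (s + j))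
        * ∫ t in Set.Ioi (0:ℝ), t ^ ((k:ℝ) + s + 1) * Real.exp (-t^2/2) := by
  have hprod_pos : 0 < ∏ j ∈ Finset.range (k+1), (s + (j:ℝ)) :=
    Finset.prod_pos fun j _ => by have : (0:ℝ) ≤ j := Nat.cast_nonneg j; linarith
  have hBvnn : 0 ≤ (k.factorial : ℝ) / ∏ j ∈ Finset.range (k+1), (s + (j:ℝ)) :=
    div_nonneg (Nat.cast_nonneg _) hprod_pos.le
  have hknn : (-1:ℝ) < (k:ℝ) + s + 1 := by
    have : (0:ℝ) ≤ k := Nat.cast_nonneg k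
    linarith
  have hGvnn : 0 ≤ ∫ t in Set.Ioi (0:ℝ), t ^ ((k:ℝ) + s + 1) * Real.exp (-t^2/2) :=
    setIntegral_nonneg measurableSet_Ioi fun t ht =>
      mul_nonneg (Real.rpow_nonneg (le_of_lt ht) _) (Real.exp_pos _).le
  -- left side equals toReal of the double lintegral
  have key2 : ∫ c in Set.Ioi (0:ℝ), ∫ σ in Set.Ioi (0:ℝ), Faux s k c σ
      = (∫⁻ c in Set.Ioi (0:ℝ), ∫⁻ σ in Set.Ioi (0:ℝ), ENNReal.ofReal (Faux s k c σ)).toReal := by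
    rw [integral_eq_lintegral_of_nonneg_ae ?_ ?_]
    · congr 1
      refine setLIntegral_congr_fun measurableSet_Ioi (fun c hc => ?_)
      rw [← ofReal_integral_eq_lintegral_ofReal (Faux_sec s k hc) ?_]
      filter_upwards [ae_restrict_mem measurableSet_Ioi] with σ hσ
      exact Faux_nn s k hc hσ
    · filter_upwards [ae_restrict_mem measurableSet_Ioi] with c hc
      exact setIntegral_nonneg measurableSet_Ioi fun σ hσ => Faux_nn s k hc hσ
    · exact ((Faux_meas s k).aestronglyMeasurable.integral_prod_right')
  rw [key2]
  have swap1 : (∫⁻ c in Set.Ioi (0:ℝ), ∫⁻ σ in Set.Ioi (0:ℝ), ENNReal.ofReal (Faux s k c σ))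
      = ∫⁻ σ in Set.Ioi (0:ℝ), ∫⁻ c in Set.Ioi (0:ℝ), ENNReal.ofReal (Faux s k c σ) :=
    lintegral_lintegral_swap ((ENNReal.measurable_ofReal.comp (Faux_meas s k)).aemeasurable)
  rw [swap1,
    setLIntegral_congr_fun measurableSet_Ioi (fun σ (hσ : σ ∈ Set.Ioi (0:ℝ)) =>
      trans_lemma s k hσ),
    lintegral_lintegral_swap ((Jaux_meas s k).aemeasurable),
    setLIntegral_congr_fun measurableSet_Ioi (fun t (ht : t ∈ Set.Ioi (0:ℝ)) =>
      inner_lemma k hs ht)]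
  have e2 : ∀ t ∈ Set.Ioi (0:ℝ),
      (t ^ ((k:ℝ) + s) * ((k.factorial : ℝ) / ∏ j ∈ Finset.range (k+1), (s + j)))
          * (t * Real.exp (-t^2/2))
        = ((k.factorial : ℝ) / ∏ j ∈ Finset.range (k+1), (s + j))
            * (t ^ ((k:ℝ) + s + 1) * Real.exp (-t^2/2)) := by
    intro t ht
    have ht0 : (0:ℝ) < t := ht
    have h3 : t ^ ((k:ℝ) + s) * t = t ^ ((k:ℝ) + s + 1) := by
      calc t ^ ((k:ℝ) + s) * t = t ^ ((k:ℝ) + s) * t ^ (1:ℝ) := by rw [Real.rpow_one]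
        _ = t ^ ((k:ℝ) + s + 1) := (Real.rpow_add ht0 _ _).symm
    calc (t ^ ((k:ℝ) + s) * ((k.factorial : ℝ) / ∏ j ∈ Finset.range (k+1), (s + j)))
          * (t * Real.exp (-t^2/2))
        = ((k.factorial : ℝ) / ∏ j ∈ Finset.range (k+1), (s + j))
            * ((t ^ ((k:ℝ) + s) * t) * Real.exp (-t^2/2)) := by ring
      _ = _ := by rw [h3]
  rw [setLIntegral_congr_fun measurableSet_Ioi (fun t ht => by rw [e2 t ht])]
  rw [← ofReal_integral_eq_lintegral_ofReal
    ((gaussMomentIntegrable hknn).const_mul _) ?_]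
  · rw [integral_const_mul, ENNReal.toReal_ofReal (mul_nonneg hBvnn hGvnn)]
  · filter_upwards [ae_restrict_mem measurableSet_Ioi] with t ht
    exact mul_nonneg hBvnn
      (mul_nonneg (Real.rpow_nonneg (le_of_lt ht) _) (Real.exp_pos _).le)

theorem stmt16 (β : ℝ) (hβ : -1 < β) (l r : ℕ) (hr1 : 1 ≤ r) (hrl : r ≤ l) :
    ∫ c in Set.Ioi (0 : ℝ), I l r c * c ^ β * Real.exp (-c ^ 2 / 2) / Z β
      = (1 / 2 ^ (l - r)) *
          (∏ i ∈ Finset.range (r - 1), ((β + 1) / 2 + (i : ℝ) / 2)) /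
          (∏ i ∈ Finset.range (l - 1), (β / 2 + 1 + (i : ℝ))) := by
  have hr1R : (1:ℝ) ≤ r := by exact_mod_cast hr1
  have hlR : (1:ℝ) ≤ l := by exact_mod_cast hr1.trans hrl
  set k : ℕ := 2 * l - r - 1 with hk
  set s : ℝ := β + r with hs_def
  have hs : 0 < s := by rw [hs_def]; linarith
  have hk1 : k + 1 = 2 * l - r := by omega
  have hkR : (k : ℝ) = 2 * (l:ℝ) - r - 1 := by
    have h := congrArg (fun n : ℕ => (n : ℝ)) (show k + 1 + r = 2 * l by omega)
    push_cast at h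
    linarith
  -- Step 1: the integrand rewrites as a constant times the inner integral of Faux
  have step1 : ∀ c ∈ Set.Ioi (0:ℝ), I l r c * c ^ β * Real.exp (-c^2/2)
      = ((k.factorial : ℝ))⁻¹ * ∫ σ in Set.Ioi (0:ℝ), Faux s k c σ := by
    intro c hc
    have hc0 : (0:ℝ) < c := hc
    have hptw : ∀ σ : ℝ, Faux s k c σ
        = (c ^ (r-1) * (c ^ β * Real.exp (-c^2/2)))
          * ((σ + c) * σ ^ k * Real.exp (-σ^2/2 - c*σ)) := by
      intro σ
      have h1 : c ^ (s-1) = c ^ β * c ^ (r-1 : ℕ) := by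
        rw [← Real.rpow_natCast c (r-1), ← Real.rpow_add hc0]
        congr 1
        rw [Nat.cast_sub hr1, hs_def]
        ring
      have h2 : Real.exp (-(σ+c)^2/2) = Real.exp (-σ^2/2 - c*σ) * Real.exp (-c^2/2) := by
        rw [← Real.exp_add]; congr 1; ring
      unfold Faux
      rw [h1, h2]; ring
    have hint : (∫ σ in Set.Ioi (0:ℝ), Faux s k c σ)
        = (c ^ (r-1) * (c ^ β * Real.exp (-c^2/2))) * ∫ σ in Set.Ioi (0:ℝ),
            (σ + c) * σ ^ k * Real.exp (-σ^2/2 - c*σ) := by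
      rw [← integral_const_mul]
      exact setIntegral_congr_fun measurableSet_Ioi fun σ _ => hptw σ
    rw [hint]
    simp only [I, ← hk]
    ring
  have step2 : ∫ c in Set.Ioi (0:ℝ), I l r c * c ^ β * Real.exp (-c^2/2)
      = ((k.factorial : ℝ))⁻¹ * ∫ c in Set.Ioi (0:ℝ), ∫ σ in Set.Ioi (0:ℝ), Faux s k c σ := by
    rw [setIntegral_congr_fun measurableSet_Ioi fun c hc => step1 c hc, integral_const_mul]
  -- assemble
  rw [integral_div, step2, core k hs]
  -- change the exponent
  rw [show (k:ℝ) + s + 1 = β + 2*(l:ℝ) by rw [hkR, hs_def]; ring]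
  -- evaluate the Gaussian moments
  have hZ : Z β = 2 ^ ((β-1)/2) * Real.Gamma ((β+1)/2) := gaussMoment hβ
  have hGamma_pos : 0 < Real.Gamma ((β+1)/2) := Real.Gamma_pos_of_pos (by linarith)
  have h2pow : (0:ℝ) < 2 ^ ((β-1)/2) := Real.rpow_pos_of_pos two_pos _
  have hZpos : 0 < Z β := by rw [hZ]; exact mul_pos h2pow hGamma_pos
  have hGv : (∫ t in Set.Ioi (0:ℝ), t ^ (β + 2*(l:ℝ)) * Real.exp (-t^2/2))
      = 2 ^ ((β + 2*(l:ℝ) - 1)/2) * Real.Gamma ((β + 2*(l:ℝ) + 1)/2) :=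
    gaussMoment (by linarith)
  have hGvZ : (∫ t in Set.Ioi (0:ℝ), t ^ (β + 2*(l:ℝ)) * Real.exp (-t^2/2)) / Z β
      = 2^l * ∏ i ∈ Finset.range l, ((β+1)/2 + (i:ℝ)) := by
    have h1 : Real.Gamma ((β + 2*(l:ℝ) + 1)/2)
        = Real.Gamma ((β+1)/2) * ∏ i ∈ Finset.range l, ((β+1)/2 + (i:ℝ)) := by
      rw [show (β + 2*(l:ℝ) + 1)/2 = (β+1)/2 + (l:ℕ) by push_cast; ring]
      exact GammaAddNat (by linarith) l
    have h2 : (2:ℝ) ^ ((β + 2*(l:ℝ) - 1)/2) = 2 ^ ((β-1)/2) * 2 ^ l := by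
      rw [← Real.rpow_natCast 2 l, ← Real.rpow_add two_pos]
      congr 1
      push_cast
      ring
    rw [hGv, hZ, h1, h2]
    field_simp
  have hprod_pos : 0 < ∏ j ∈ Finset.range (k+1), (s + (j:ℝ)) :=
    Finset.prod_pos fun j _ => by have : (0:ℝ) ≤ j := Nat.cast_nonneg j; linarith
  have hfact : ((k.factorial : ℝ)) ≠ 0 := Nat.cast_ne_zero.mpr k.factorial_ne_zero
  have hmid : ((k.factorial : ℝ))⁻¹ * (((k.factorial : ℝ) / ∏ j ∈ Finset.range (k+1), (s + j))
        * ∫ t in Set.Ioi (0:ℝ), t ^ (β + 2*(l:ℝ)) * Real.exp (-t^2/2)) / Z β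
      = 2^l * (∏ i ∈ Finset.range l, ((β+1)/2 + (i:ℝ)))
          / ∏ j ∈ Finset.range (2*l - r), (β + (r:ℝ) + j) := by
    rw [← hk1, ← hs_def]
    have hGvZ' : (∫ t in Set.Ioi (0:ℝ), t ^ (β + 2*(l:ℝ)) * Real.exp (-t^2/2))
        = (2^l * ∏ i ∈ Finset.range l, ((β+1)/2 + (i:ℝ))) * Z β := by
      rw [div_eq_iff hZpos.ne'] at hGvZ
      exact hGvZ
    rw [div_eq_div_iff hZpos.ne' hprod_pos.ne', ← hGvZ']
    field_simp
  rw [hmid]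
  exact final_algebra β hβ l r hr1 hrl
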